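/- Let α, β > -1 and γ₁, γ₂ ≥ 0. Then μ_{α+γ₁, β+γ₂}^+(B(θ, |θ-φ|)) ≍ (θ+φ)^{2γ₁} (2π-θ-φ)^{2γ₂} μ_{α,β}^+(B(θ, |θ-φ|)) uniformly in θ, φ ∈ (0,π); i.e., there exist constants 0 < c ≤ C depending only on α, β, γ₁, γ₂ such that the two-sided comparison holds for all θ, φ ∈ (0,π). -/

import Mathlib

open MeasureTheory Real Set

noncomputable section

/-- The Jacobi measure `μ_{α,β}^+` on `(0,π)`: density
`(sin(θ/2))^(2α+1) (cos(θ/2))^(2β+1)` w.r.t. Lebesgue measure on `(0,π)`. -/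
def jacobiMeasure (α β : ℝ) : Measure ℝ :=
  (volume.restrict (Ioo 0 π)).withDensity
    (fun θ => ENNReal.ofReal (Real.sin (θ / 2) ^ (2 * α + 1) * Real.cos (θ / 2) ^ (2 * β + 1)))

/-- The ball `B(θ,r) = (θ-r, θ+r) ∩ (0,π)`. -/
def jacobiBall (θ r : ℝ) : Set ℝ := Ioo (θ - r) (θ + r) ∩ Ioo 0 π

/-- The measure `Π_α` on `[-1,1]`. -/
def PiMeasure (α : ℝ) : Measure ℝ :=
  if α = -(1 / 2) then (2 : ENNReal)⁻¹ • (Measure.dirac (-1) + Measure.dirac 1)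
  else
    (volume.restrict (Icc (-1) 1)).withDensity
      (fun u => ENNReal.ofReal
        (Real.Gamma (α + 1) / (Real.sqrt π * Real.Gamma (α + 1 / 2)) * (1 - u ^ 2) ^ (α - 1 / 2)))

/-- `q(θ,φ,u,v) = 1 - u sin(θ/2) sin(φ/2) - v cos(θ/2) cos(φ/2)`. -/
def qfun (θ φ u v : ℝ) : ℝ :=
  1 - u * Real.sin (θ / 2) * Real.sin (φ / 2) - v * Real.cos (θ / 2) * Real.cos (φ / 2)

/-- `Ψ^{α,β}(t,s) = sinh(t/2) / (cosh(t/2) - 1 + s)^(α+β+2)`. -/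
def Psi (α β t s : ℝ) : ℝ :=
  Real.sinh (t / 2) / (Real.cosh (t / 2) - 1 + s) ^ (α + β + 2)

/-- The Jacobi-Poisson kernel `H_t^{α,β}(θ,φ)`. -/
def Hker (α β t θ φ : ℝ) : ℝ :=
  ((2 : ℝ) ^ (-(α + β + 2)) / (jacobiMeasure α β (Ioo 0 π)).toReal) * Real.sinh (t / 2) *
    ∫ u, ∫ v, 1 / (Real.cosh (t / 2) - 1 + qfun θ φ u v) ^ (α + β + 2)
      ∂(PiMeasure β) ∂(PiMeasure α)

/-- The symmetrized kernel `H̃_t^{α,β}(θ,φ) = (1/4) sin θ sin φ H_t^{α+1,β+1}(θ,φ)`. -/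
def Htilde (α β t θ φ : ℝ) : ℝ :=
  (1 / 4) * Real.sin θ * Real.sin φ * Hker (α + 1) (β + 1) t θ φ

end

namespace JacobiAux

/-- rpow comparison under two-sided linear comparison of bases. -/
lemma rpow_comp {p x y m M : ℝ} (hm : 0 < m) (hy : 0 < y) (h1 : m * y ≤ x) (h2 : x ≤ M * y) :
    min (m ^ p) (M ^ p) * y ^ p ≤ x ^ p ∧ x ^ p ≤ max (m ^ p) (M ^ p) * y ^ p := by
  have hx : 0 < x := lt_of_lt_of_le (by positivity) h1
  have hM : 0 < M := by by_contra h; push_neg at h; nlinarith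
  have hyp : (0:ℝ) ≤ y ^ p := Real.rpow_nonneg hy.le p
  rcases le_or_gt 0 p with hp | hp
  · refine ⟨?_, ?_⟩
    · calc min (m ^ p) (M ^ p) * y ^ p ≤ m ^ p * y ^ p :=
            mul_le_mul_of_nonneg_right (min_le_left _ _) hyp
        _ = (m * y) ^ p := (Real.mul_rpow hm.le hy.le).symm
        _ ≤ x ^ p := Real.rpow_le_rpow (by positivity) h1 hp
    · calc x ^ p ≤ (M * y) ^ p := Real.rpow_le_rpow hx.le h2 hp
        _ = M ^ p * y ^ p := Real.mul_rpow hM.le hy.le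
        _ ≤ max (m ^ p) (M ^ p) * y ^ p :=
            mul_le_mul_of_nonneg_right (le_max_right _ _) hyp
  · refine ⟨?_, ?_⟩
    · calc min (m ^ p) (M ^ p) * y ^ p ≤ M ^ p * y ^ p :=
            mul_le_mul_of_nonneg_right (min_le_right _ _) hyp
        _ = (M * y) ^ p := (Real.mul_rpow hM.le hy.le).symm
        _ ≤ x ^ p := Real.rpow_le_rpow_of_nonpos hx h2 hp.le
    · calc x ^ p ≤ (m * y) ^ p := Real.rpow_le_rpow_of_nonpos (by positivity) h1 hp.le
        _ = m ^ p * y ^ p := Real.mul_rpow hm.le hy.le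
        _ ≤ max (m ^ p) (M ^ p) * y ^ p :=
            mul_le_mul_of_nonneg_right (le_max_left _ _) hyp

/-- pull a nonnegative scalar out of `∫⁻ ofReal`. -/
lemma lint_const_mul {s : Set ℝ} {g : ℝ → ℝ} {k : ℝ} (hk : 0 ≤ k) :
    (∫⁻ ψ in s, ENNReal.ofReal (k * g ψ)) =
      ENNReal.ofReal k * ∫⁻ ψ in s, ENNReal.ofReal (g ψ) := by
  rw [← lintegral_const_mul' _ _ ENNReal.ofReal_ne_top]
  congr 1
  ext ψ
  exact ENNReal.ofReal_mul hk

/-- monotonicity of `∫⁻ ofReal` from a pointwise bound on the set. -/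
lemma lint_mono {s : Set ℝ} (hs : MeasurableSet s) {f g : ℝ → ℝ}
    (h : ∀ ψ ∈ s, f ψ ≤ g ψ) :
    (∫⁻ ψ in s, ENNReal.ofReal (f ψ)) ≤ ∫⁻ ψ in s, ENNReal.ofReal (g ψ) := by
  refine lintegral_mono_ae ?_
  filter_upwards [ae_restrict_mem hs] with ψ hψ
  exact ENNReal.ofReal_le_ofReal (h ψ hψ)

/-- one-weight estimate: `∫⁻ over (a,b) of ψ^p ≍ (b-a) b^p`. -/
lemma oneWeight (p : ℝ) (hp : -1 < p) : ∃ c C : ℝ, 0 < c ∧ 0 < C ∧ ∀ a b : ℝ, 0 ≤ a → a < b →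
    ENNReal.ofReal (c * ((b - a) * b ^ p)) ≤ (∫⁻ ψ in Ioo a b, ENNReal.ofReal (ψ ^ p)) ∧
    (∫⁻ ψ in Ioo a b, ENNReal.ofReal (ψ ^ p)) ≤ ENNReal.ofReal (C * ((b - a) * b ^ p)) := by
  have hp1 : (0:ℝ) < p + 1 := by linarith
  refine ⟨min ((1/2:ℝ) ^ p) 1 / 2, max 1 (1/(p+1)),
    by have := Real.rpow_pos_of_pos (by norm_num : (0:ℝ) < 1/2) p; positivity,
    by positivity, fun a b ha hab => ?_⟩
  have hb : 0 < b := lt_of_le_of_lt ha hab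
  constructor
  · -- lower bound
    set m' := (a + b) / 2 with hm'
    have hsub : Ioo m' b ⊆ Ioo a b := Ioo_subset_Ioo (by simp only [hm']; linarith) le_rfl
    have key : ∀ ψ ∈ Ioo m' b, ENNReal.ofReal (min ((1/2:ℝ) ^ p) 1 * b ^ p)
        ≤ ENNReal.ofReal (ψ ^ p) := by
      intro ψ hψ
      apply ENNReal.ofReal_le_ofReal
      have h1 : (1/2 : ℝ) * b ≤ ψ := by
        have h2 : b / 2 ≤ m' := by simp only [hm']; linarith
        have h3 := hψ.1
        linarith
      have h2 : ψ ≤ 1 * b := by simpa using hψ.2.le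
      have h4 := (rpow_comp (p := p) (by norm_num : (0:ℝ) < 1/2) hb h1 h2).1
      simpa [Real.one_rpow] using h4
    calc ENNReal.ofReal (min ((1/2:ℝ) ^ p) 1 / 2 * ((b - a) * b ^ p))
        = ENNReal.ofReal (min ((1/2:ℝ) ^ p) 1 * b ^ p) * ENNReal.ofReal (b - m') := by
          rw [← ENNReal.ofReal_mul]
          · congr 1; simp only [hm']; ring
          · have h5 : (0:ℝ) < min ((1/2:ℝ) ^ p) 1 :=
              lt_min (Real.rpow_pos_of_pos (by norm_num) p) one_pos
            have h6 := Real.rpow_nonneg hb.le p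
            positivity
      _ = ∫⁻ _ψ in Ioo m' b, ENNReal.ofReal (min ((1/2:ℝ) ^ p) 1 * b ^ p) := by
          rw [setLIntegral_const, Real.volume_Ioo]
      _ ≤ ∫⁻ ψ in Ioo m' b, ENNReal.ofReal (ψ ^ p) := by
          refine lintegral_mono_ae ?_
          filter_upwards [ae_restrict_mem measurableSet_Ioo] with ψ hψ using key ψ hψ
      _ ≤ ∫⁻ ψ in Ioo a b, ENNReal.ofReal (ψ ^ p) := lintegral_mono_set hsub
  · -- upper bound
    have hInt : IntegrableOn (fun ψ : ℝ => ψ ^ p) (Ioo a b) := by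
      have h := (intervalIntegral.intervalIntegrable_rpow' (a := a) (b := b) hp)
      exact h.1.mono_set Ioo_subset_Ioc_self
    have hnn : 0 ≤ᵐ[volume.restrict (Ioo a b)] fun ψ : ℝ => ψ ^ p := by
      filter_upwards [ae_restrict_mem measurableSet_Ioo] with ψ hψ
      exact Real.rpow_nonneg (le_trans ha hψ.1.le) p
    rw [← ofReal_integral_eq_lintegral_ofReal hInt hnn]
    apply ENNReal.ofReal_le_ofReal
    have hbp : (0:ℝ) ≤ (b - a) * b ^ p :=
      mul_nonneg (by linarith) (Real.rpow_nonneg hb.le p)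
    rcases le_or_gt p 0 with hple | hpgt
    · have hval : ∫ ψ in Ioo a b, ψ ^ p = (b ^ (p+1) - a ^ (p+1)) / (p+1) := by
        rw [← integral_Ioc_eq_integral_Ioo, ← intervalIntegral.integral_of_le hab.le]
        exact integral_rpow (Or.inl hp)
      rw [hval]
      have hkey : b ^ (p+1) - a ^ (p+1) ≤ (b - a) * b ^ p := by
        have eb : b ^ (p+1) = b ^ p * b := Real.rpow_add_one hb.ne' p
        rcases eq_or_lt_of_le ha with ha0 | ha0
        · rw [← ha0, Real.zero_rpow (by linarith : p + 1 ≠ 0), eb]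
          nlinarith [Real.rpow_nonneg hb.le p]
        · have ea : a ^ (p+1) = a ^ p * a := Real.rpow_add_one ha0.ne' p
          have hba : b ^ p ≤ a ^ p := Real.rpow_le_rpow_of_nonpos ha0 hab.le hple
          rw [eb, ea]
          nlinarith
      calc (b ^ (p+1) - a ^ (p+1)) / (p+1) ≤ ((b - a) * b ^ p) / (p+1) := by gcongr
        _ = (1/(p+1)) * ((b - a) * b ^ p) := by ring
        _ ≤ max 1 (1/(p+1)) * ((b - a) * b ^ p) :=
            mul_le_mul_of_nonneg_right (le_max_right _ _) hbp
    · have hmono : ∫ ψ in Ioo a b, ψ ^ p ≤ (b - a) * b ^ p := by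
        have hconst : ∫ _ψ in Ioo a b, b ^ p ∂volume = (b - a) * b ^ p := by
          rw [setIntegral_const, measureReal_def, Real.volume_Ioo, ENNReal.toReal_ofReal (by linarith)]
          rw [smul_eq_mul]
        rw [← hconst]
        refine setIntegral_mono_on hInt ?_ measurableSet_Ioo ?_
        · exact integrableOn_const (by rw [Real.volume_Ioo]; exact ENNReal.ofReal_ne_top)
        · intro ψ hψ
          exact Real.rpow_le_rpow (le_trans ha hψ.1.le) hψ.2.le hpgt.le
      exact hmono.trans (le_mul_of_one_le_left hbp (le_max_left _ _))

/-- reflection of a set lintegral. -/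
lemma reflect_lintegral (f : ℝ → ENNReal) (a b : ℝ) :
    (∫⁻ ψ in Ioo a b, f (π - ψ)) = ∫⁻ ψ in Ioo (π - b) (π - a), f ψ := by
  have mp : MeasurePreserving (fun x : ℝ => π - x) volume volume :=
    Measure.measurePreserving_sub_left volume π
  have h := mp.setLIntegral_comp_preimage_emb
      (MeasurableEquiv.subLeft π).measurableEmbedding f (Ioo (π - b) (π - a))
  have hset : (fun x : ℝ => π - x) ⁻¹' (Ioo (π - b) (π - a)) = Ioo a b := by
    ext x
    simp only [mem_preimage, mem_Ioo]
    constructor <;> rintro ⟨h1, h2⟩ <;> exact ⟨by linarith, by linarith⟩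
  rw [hset] at h
  exact h

/-- two-weight estimate, case `b ≤ π/2`. -/
lemma twoWeightLow (p q : ℝ) (hp : -1 < p) (hq : -1 < q) : ∃ c C : ℝ, 0 < c ∧ 0 < C ∧
    ∀ a b : ℝ, 0 ≤ a → a < b → b ≤ π / 2 →
    ENNReal.ofReal (c * ((b - a) * (b ^ p * (π - a) ^ q))) ≤
      (∫⁻ ψ in Ioo a b, ENNReal.ofReal (ψ ^ p * (π - ψ) ^ q)) ∧
    (∫⁻ ψ in Ioo a b, ENNReal.ofReal (ψ ^ p * (π - ψ) ^ q)) ≤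
      ENNReal.ofReal (C * ((b - a) * (b ^ p * (π - a) ^ q))) := by
  obtain ⟨c₁, C₁, hc₁, hC₁, H₁⟩ := oneWeight p hp
  set mq : ℝ := min ((1/2:ℝ) ^ q) ((2:ℝ) ^ q) with hmq
  set Mq : ℝ := max ((1/2:ℝ) ^ q) ((2:ℝ) ^ q) with hMq
  have hmq0 : 0 < mq := lt_min (Real.rpow_pos_of_pos (by norm_num) q)
      (Real.rpow_pos_of_pos (by norm_num) q)
  have hMq0 : 0 < Mq := lt_of_lt_of_le hmq0 (min_le_max)
  refine ⟨mq * c₁, Mq * C₁, by positivity, by positivity, fun a b ha hab hb2 => ?_⟩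
  have hπ := Real.pi_pos
  have haπ : 0 < π - a := by nlinarith
  have hbnd : ∀ ψ ∈ Ioo a b, mq * (π - a) ^ q ≤ (π - ψ) ^ q ∧
      (π - ψ) ^ q ≤ Mq * (π - a) ^ q := by
    intro ψ hψ
    exact rpow_comp (by norm_num) haπ (by nlinarith [hψ.2]) (by nlinarith [hψ.1])
  have haq : (0:ℝ) ≤ (π - a) ^ q := Real.rpow_nonneg haπ.le q
  constructor
  · calc ENNReal.ofReal (mq * c₁ * ((b - a) * (b ^ p * (π - a) ^ q)))
        = ENNReal.ofReal (mq * (π - a) ^ q) * ENNReal.ofReal (c₁ * ((b - a) * b ^ p)) := by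
          rw [← ENNReal.ofReal_mul (by positivity)]; congr 1; ring
      _ ≤ ENNReal.ofReal (mq * (π - a) ^ q) * ∫⁻ ψ in Ioo a b, ENNReal.ofReal (ψ ^ p) :=
          mul_le_mul_right (H₁ a b ha hab).1 _
      _ = ∫⁻ ψ in Ioo a b, ENNReal.ofReal ((mq * (π - a) ^ q) * ψ ^ p) :=
          (lint_const_mul (by positivity)).symm
      _ ≤ ∫⁻ ψ in Ioo a b, ENNReal.ofReal (ψ ^ p * (π - ψ) ^ q) := by
          refine lint_mono measurableSet_Ioo fun ψ hψ => ?_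
          have h1 := (hbnd ψ hψ).1
          have h2 : (0:ℝ) ≤ ψ ^ p := Real.rpow_nonneg (le_trans ha hψ.1.le) p
          nlinarith
  · calc (∫⁻ ψ in Ioo a b, ENNReal.ofReal (ψ ^ p * (π - ψ) ^ q))
        ≤ ∫⁻ ψ in Ioo a b, ENNReal.ofReal ((Mq * (π - a) ^ q) * ψ ^ p) := by
          refine lint_mono measurableSet_Ioo fun ψ hψ => ?_
          have h1 := (hbnd ψ hψ).2
          have h2 : (0:ℝ) ≤ ψ ^ p := Real.rpow_nonneg (le_trans ha hψ.1.le) p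
          nlinarith
      _ = ENNReal.ofReal (Mq * (π - a) ^ q) * ∫⁻ ψ in Ioo a b, ENNReal.ofReal (ψ ^ p) :=
          lint_const_mul (by positivity)
      _ ≤ ENNReal.ofReal (Mq * (π - a) ^ q) * ENNReal.ofReal (C₁ * ((b - a) * b ^ p)) :=
          mul_le_mul_right (H₁ a b ha hab).2 _
      _ = ENNReal.ofReal (Mq * C₁ * ((b - a) * (b ^ p * (π - a) ^ q))) := by
          rw [← ENNReal.ofReal_mul (by positivity)]; congr 1; ring

/-- two-weight estimate, case `π/2 ≤ a`. -/
lemma twoWeightHigh (p q : ℝ) (hp : -1 < p) (hq : -1 < q) : ∃ c C : ℝ, 0 < c ∧ 0 < C ∧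
    ∀ a b : ℝ, π / 2 ≤ a → a < b → b ≤ π →
    ENNReal.ofReal (c * ((b - a) * (b ^ p * (π - a) ^ q))) ≤
      (∫⁻ ψ in Ioo a b, ENNReal.ofReal (ψ ^ p * (π - ψ) ^ q)) ∧
    (∫⁻ ψ in Ioo a b, ENNReal.ofReal (ψ ^ p * (π - ψ) ^ q)) ≤
      ENNReal.ofReal (C * ((b - a) * (b ^ p * (π - a) ^ q))) := by
  obtain ⟨c₁, C₁, hc₁, hC₁, H₁⟩ := twoWeightLow q p hq hp
  refine ⟨c₁, C₁, hc₁, hC₁, fun a b ha hab hb => ?_⟩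
  have hrefl : (∫⁻ ψ in Ioo a b, ENNReal.ofReal (ψ ^ p * (π - ψ) ^ q)) =
      ∫⁻ ψ in Ioo (π - b) (π - a), ENNReal.ofReal (ψ ^ q * (π - ψ) ^ p) := by
    rw [← reflect_lintegral (fun t => ENNReal.ofReal (t ^ q * (π - t) ^ p)) a b]
    apply lintegral_congr
    intro ψ
    congr 1
    ring_nf
  have h := H₁ (π - b) (π - a) (by linarith) (by linarith) (by linarith)
  rw [hrefl]
  constructor
  · refine le_trans (le_of_eq ?_) h.1
    congr 1
    ring_nf
  · refine le_trans h.2 (le_of_eq ?_)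
    congr 1
    ring_nf

set_option maxHeartbeats 1000000 in
lemma twoWeight (p q : ℝ) (hp : -1 < p) (hq : -1 < q) : ∃ c C : ℝ, 0 < c ∧ 0 < C ∧
    ∀ a b : ℝ, 0 ≤ a → a < b → b ≤ π →
    ENNReal.ofReal (c * ((b - a) * (b ^ p * (π - a) ^ q))) ≤
      (∫⁻ ψ in Ioo a b, ENNReal.ofReal (ψ ^ p * (π - ψ) ^ q)) ∧
    (∫⁻ ψ in Ioo a b, ENNReal.ofReal (ψ ^ p * (π - ψ) ^ q)) ≤
      ENNReal.ofReal (C * ((b - a) * (b ^ p * (π - a) ^ q))) := by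
  obtain ⟨cl, Cl, hcl, hCl, Hl⟩ := twoWeightLow p q hp hq
  obtain ⟨ch, Ch, hch, hCh, Hh⟩ := twoWeightHigh p q hp hq
  set kp : ℝ := min ((1/2:ℝ) ^ p) 1 with hkp
  set Kp : ℝ := max ((1/2:ℝ) ^ p) 1 with hKp
  set kq : ℝ := min ((1/2:ℝ) ^ q) 1 with hkq
  set Kq : ℝ := max ((1/2:ℝ) ^ q) 1 with hKq
  have hkp0 : 0 < kp := lt_min (Real.rpow_pos_of_pos (by norm_num) p) one_pos
  have hKp0 : 0 < Kp := lt_of_lt_of_le hkp0 min_le_max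
  have hkq0 : 0 < kq := lt_min (Real.rpow_pos_of_pos (by norm_num) q) one_pos
  have hKq0 : 0 < Kq := lt_of_lt_of_le hkq0 min_le_max
  have hkp1 : kp ≤ 1 := min_le_right _ _
  have hkq1 : kq ≤ 1 := min_le_right _ _
  have hKp1 : 1 ≤ Kp := le_max_right _ _
  have hKq1 : 1 ≤ Kq := le_max_right _ _
  refine ⟨min (cl * kp / 2) (ch * kq / 2), Cl * Kp + Ch * Kq, by positivity, by positivity,
    fun a b ha hab hb => ?_⟩
  have hπ := Real.pi_pos
  have hb0 : 0 < b := lt_of_le_of_lt ha hab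
  have hbp : (0:ℝ) ≤ b ^ p := Real.rpow_nonneg hb0.le p
  have haq : (0:ℝ) ≤ (π - a) ^ q := Real.rpow_nonneg (by linarith) q
  have hX : (0:ℝ) ≤ (b - a) * (b ^ p * (π - a) ^ q) :=
    mul_nonneg (by linarith) (mul_nonneg hbp haq)
  have hcmin1 : min (cl * kp / 2) (ch * kq / 2) ≤ cl := by
    calc min (cl * kp / 2) (ch * kq / 2) ≤ cl * kp / 2 := min_le_left _ _
      _ ≤ cl := by nlinarith
  have hcmin2 : min (cl * kp / 2) (ch * kq / 2) ≤ ch := by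
    calc min (cl * kp / 2) (ch * kq / 2) ≤ ch * kq / 2 := min_le_right _ _
      _ ≤ ch := by nlinarith
  have hCle1 : Cl ≤ Cl * Kp + Ch * Kq := by nlinarith
  have hCle2 : Ch ≤ Cl * Kp + Ch * Kq := by nlinarith
  rcases le_or_gt b (π/2) with hble | hbgt
  · have h := Hl a b ha hab hble
    exact ⟨le_trans (ENNReal.ofReal_le_ofReal (mul_le_mul_of_nonneg_right hcmin1 hX)) h.1,
      le_trans h.2 (ENNReal.ofReal_le_ofReal (mul_le_mul_of_nonneg_right hCle1 hX))⟩
  rcases le_or_gt (π/2) a with hage | halt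
  · have h := Hh a b hage hab hb
    exact ⟨le_trans (ENNReal.ofReal_le_ofReal (mul_le_mul_of_nonneg_right hcmin2 hX)) h.1,
      le_trans h.2 (ENNReal.ofReal_le_ofReal (mul_le_mul_of_nonneg_right hCle2 hX))⟩
  -- middle case : a < π/2 < b
  have hmid : (0:ℝ) < π/2 := by linarith
  have e2 : (π/2) ^ p ≤ Kp * b ^ p ∧ kp * b ^ p ≤ (π/2) ^ p := by
    have h := rpow_comp (p := p) (by norm_num : (0:ℝ) < 1/2) hb0
      (by linarith : (1/2:ℝ) * b ≤ π/2) (by linarith : (π/2:ℝ) ≤ 1 * b)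
    rw [Real.one_rpow] at h
    exact ⟨h.2, h.1⟩
  have e3 : (π - π/2) ^ q ≤ Kq * (π - a) ^ q ∧ kq * (π - a) ^ q ≤ (π - π/2) ^ q := by
    have hrw : π - π/2 = π/2 := by ring
    rw [hrw]
    have h := rpow_comp (p := q) (by norm_num : (0:ℝ) < 1/2)
      (by linarith : (0:ℝ) < π - a)
      (by linarith : (1/2:ℝ) * (π - a) ≤ π/2) (by linarith : (π/2:ℝ) ≤ 1 * (π - a))
    rw [Real.one_rpow] at h
    exact ⟨h.2, h.1⟩
  have hmq : (0:ℝ) ≤ (π/2) ^ p := Real.rpow_nonneg hmid.le p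
  have hmqq : (0:ℝ) ≤ (π - π/2) ^ q := Real.rpow_nonneg (by linarith) q
  constructor
  · -- lower bound
    rcases le_total (b - π/2) (π/2 - a) with hlr | hlr
    · -- left half is at least half the interval
      have h := (Hl a (π/2) ha halt le_rfl).1
      refine le_trans (ENNReal.ofReal_le_ofReal ?_)
        (le_trans h (lintegral_mono_set (Ioo_subset_Ioo le_rfl (by linarith))))
      -- min (...) * X ≤ cl * ((π/2 - a) * ((π/2)^p * (π-a)^q))
      have step : (b - a) / 2 * ((kp * b ^ p) * (π - a) ^ q) ≤
          (π/2 - a) * ((π/2) ^ p * (π - a) ^ q) := by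
        apply mul_le_mul (by linarith) (mul_le_mul_of_nonneg_right e2.2 haq)
          (by positivity) (by linarith)
      calc min (cl * kp / 2) (ch * kq / 2) * ((b - a) * (b ^ p * (π - a) ^ q))
          ≤ cl * kp / 2 * ((b - a) * (b ^ p * (π - a) ^ q)) :=
            mul_le_mul_of_nonneg_right (min_le_left _ _) hX
        _ = cl * ((b - a) / 2 * ((kp * b ^ p) * (π - a) ^ q)) := by ring
        _ ≤ cl * ((π/2 - a) * ((π/2) ^ p * (π - a) ^ q)) :=
            mul_le_mul_of_nonneg_left step hcl.le
    · -- right half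
      have h := (Hh (π/2) b le_rfl hbgt hb).1
      refine le_trans (ENNReal.ofReal_le_ofReal ?_)
        (le_trans h (lintegral_mono_set (Ioo_subset_Ioo (by linarith) le_rfl)))
      have step : (b - a) / 2 * (b ^ p * (kq * (π - a) ^ q)) ≤
          (b - π/2) * (b ^ p * (π - π/2) ^ q) := by
        apply mul_le_mul (by linarith) (mul_le_mul_of_nonneg_left e3.2 hbp)
          (by positivity) (by linarith)
      calc min (cl * kp / 2) (ch * kq / 2) * ((b - a) * (b ^ p * (π - a) ^ q))
          ≤ ch * kq / 2 * ((b - a) * (b ^ p * (π - a) ^ q)) :=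
            mul_le_mul_of_nonneg_right (min_le_right _ _) hX
        _ = ch * ((b - a) / 2 * (b ^ p * (kq * (π - a) ^ q))) := by ring
        _ ≤ ch * ((b - π/2) * (b ^ p * (π - π/2) ^ q)) :=
            mul_le_mul_of_nonneg_left step hch.le
  · -- upper bound
    have hsplit : (∫⁻ ψ in Ioo a b, ENNReal.ofReal (ψ ^ p * (π - ψ) ^ q)) ≤
        (∫⁻ ψ in Ioo a (π/2), ENNReal.ofReal (ψ ^ p * (π - ψ) ^ q)) +
        ∫⁻ ψ in Ioo (π/2) b, ENNReal.ofReal (ψ ^ p * (π - ψ) ^ q) := by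
      have hsub : Ioo a b ⊆ Ioo a (π/2) ∪ Ico (π/2) b := by
        intro x hx
        rcases lt_or_ge x (π/2) with h | h
        · exact Or.inl ⟨hx.1, h⟩
        · exact Or.inr ⟨h, hx.2⟩
      calc (∫⁻ ψ in Ioo a b, ENNReal.ofReal (ψ ^ p * (π - ψ) ^ q))
          ≤ ∫⁻ ψ in Ioo a (π/2) ∪ Ico (π/2) b, ENNReal.ofReal (ψ ^ p * (π - ψ) ^ q) :=
            lintegral_mono_set hsub
        _ ≤ (∫⁻ ψ in Ioo a (π/2), ENNReal.ofReal (ψ ^ p * (π - ψ) ^ q)) +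
            ∫⁻ ψ in Ico (π/2) b, ENNReal.ofReal (ψ ^ p * (π - ψ) ^ q) :=
            lintegral_union_le _ _ _
        _ = (∫⁻ ψ in Ioo a (π/2), ENNReal.ofReal (ψ ^ p * (π - ψ) ^ q)) +
            ∫⁻ ψ in Ioo (π/2) b, ENNReal.ofReal (ψ ^ p * (π - ψ) ^ q) := by
            congr 1
            exact setLIntegral_congr (MeasureTheory.Ioo_ae_eq_Ico (μ := volume)).symm
    refine le_trans hsplit ?_
    have hl := (Hl a (π/2) ha halt le_rfl).2
    have hh := (Hh (π/2) b le_rfl hbgt hb).2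
    have hreal1 : Cl * ((π/2 - a) * ((π/2) ^ p * (π - a) ^ q)) ≤
        Cl * Kp * ((b - a) * (b ^ p * (π - a) ^ q)) := by
      have step : (π/2 - a) * ((π/2) ^ p * (π - a) ^ q) ≤
          (b - a) * ((Kp * b ^ p) * (π - a) ^ q) := by
        apply mul_le_mul (by linarith) (mul_le_mul_of_nonneg_right e2.1 haq)
          (by positivity) (by linarith)
      calc Cl * ((π/2 - a) * ((π/2) ^ p * (π - a) ^ q))
          ≤ Cl * ((b - a) * ((Kp * b ^ p) * (π - a) ^ q)) :=
            mul_le_mul_of_nonneg_left step hCl.le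
        _ = Cl * Kp * ((b - a) * (b ^ p * (π - a) ^ q)) := by ring
    have hreal2 : Ch * ((b - π/2) * (b ^ p * (π - π/2) ^ q)) ≤
        Ch * Kq * ((b - a) * (b ^ p * (π - a) ^ q)) := by
      have step : (b - π/2) * (b ^ p * (π - π/2) ^ q) ≤
          (b - a) * (b ^ p * (Kq * (π - a) ^ q)) := by
        apply mul_le_mul (by linarith) (mul_le_mul_of_nonneg_left e3.1 hbp)
          (by positivity) (by linarith)
      calc Ch * ((b - π/2) * (b ^ p * (π - π/2) ^ q))
          ≤ Ch * ((b - a) * (b ^ p * (Kq * (π - a) ^ q))) :=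
            mul_le_mul_of_nonneg_left step hCh.le
        _ = Ch * Kq * ((b - a) * (b ^ p * (π - a) ^ q)) := by ring
    calc (∫⁻ ψ in Ioo a (π/2), ENNReal.ofReal (ψ ^ p * (π - ψ) ^ q)) +
        ∫⁻ ψ in Ioo (π/2) b, ENNReal.ofReal (ψ ^ p * (π - ψ) ^ q)
        ≤ ENNReal.ofReal (Cl * ((π/2 - a) * ((π/2) ^ p * (π - a) ^ q))) +
          ENNReal.ofReal (Ch * ((b - π/2) * (b ^ p * (π - π/2) ^ q))) := add_le_add hl hh
      _ ≤ ENNReal.ofReal (Cl * Kp * ((b - a) * (b ^ p * (π - a) ^ q))) +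
          ENNReal.ofReal (Ch * Kq * ((b - a) * (b ^ p * (π - a) ^ q))) :=
          add_le_add (ENNReal.ofReal_le_ofReal hreal1) (ENNReal.ofReal_le_ofReal hreal2)
      _ = ENNReal.ofReal ((Cl * Kp + Ch * Kq) * ((b - a) * (b ^ p * (π - a) ^ q))) := by
          rw [← ENNReal.ofReal_add (by positivity) (by positivity)]
          congr 1
          ring

set_option maxHeartbeats 1000000 in
lemma jacobi_repr (α β θ r : ℝ) :
    jacobiMeasure α β (jacobiBall θ r) =
      ∫⁻ ψ in Ioo (max (θ - r) 0) (min (θ + r) π),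
        ENNReal.ofReal (Real.sin (ψ/2) ^ (2*α+1) * Real.cos (ψ/2) ^ (2*β+1)) := by
  have hmeas : MeasurableSet (jacobiBall θ r) := measurableSet_Ioo.inter measurableSet_Ioo
  rw [jacobiMeasure, withDensity_apply _ hmeas, Measure.restrict_restrict hmeas]
  congr 1
  rw [jacobiBall, inter_assoc, inter_self, Set.Ioo_inter_Ioo]

lemma ballEst (α β : ℝ) (hα : -1 < α) (hβ : -1 < β) : ∃ c C : ℝ, 0 < c ∧ 0 < C ∧
    ∀ θ ∈ Ioo (0:ℝ) π, ∀ φ ∈ Ioo (0:ℝ) π,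
    ENNReal.ofReal (c * (|θ - φ| * ((θ + φ) ^ (2*α+1) * (2*π - θ - φ) ^ (2*β+1)))) ≤
      jacobiMeasure α β (jacobiBall θ |θ - φ|) ∧
    jacobiMeasure α β (jacobiBall θ |θ - φ|) ≤
      ENNReal.ofReal (C * (|θ - φ| * ((θ + φ) ^ (2*α+1) * (2*π - θ - φ) ^ (2*β+1)))) := by
  have hπ := Real.pi_pos
  set p : ℝ := 2*α+1 with hp_def
  set q : ℝ := 2*β+1 with hq_def
  have hp : -1 < p := by rw [hp_def]; linarith
  have hq : -1 < q := by rw [hq_def]; linarith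
  obtain ⟨c₂, C₂, hc₂, hC₂, H₂⟩ := twoWeight p q hp hq
  set ms : ℝ := min ((1/π) ^ p) ((1/2:ℝ) ^ p) with hms
  set Ms : ℝ := max ((1/π) ^ p) ((1/2:ℝ) ^ p) with hMs
  set mc : ℝ := min ((1/π) ^ q) ((1/2:ℝ) ^ q) with hmc
  set Mc : ℝ := max ((1/π) ^ q) ((1/2:ℝ) ^ q) with hMc
  set kb : ℝ := min ((1/2:ℝ) ^ p) ((2:ℝ) ^ p) with hkb
  set Kb : ℝ := max ((1/2:ℝ) ^ p) ((2:ℝ) ^ p) with hKb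
  set ka : ℝ := min ((1/2:ℝ) ^ q) ((2:ℝ) ^ q) with hka
  set Ka : ℝ := max ((1/2:ℝ) ^ q) ((2:ℝ) ^ q) with hKa
  have hms0 : 0 < ms := lt_min (Real.rpow_pos_of_pos (by positivity) p)
    (Real.rpow_pos_of_pos (by norm_num) p)
  have hMs0 : 0 < Ms := lt_of_lt_of_le hms0 min_le_max
  have hmc0 : 0 < mc := lt_min (Real.rpow_pos_of_pos (by positivity) q)
    (Real.rpow_pos_of_pos (by norm_num) q)
  have hMc0 : 0 < Mc := lt_of_lt_of_le hmc0 min_le_max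
  have hkb0 : 0 < kb := lt_min (Real.rpow_pos_of_pos (by norm_num) p)
    (Real.rpow_pos_of_pos (by norm_num) p)
  have hKb0 : 0 < Kb := lt_of_lt_of_le hkb0 min_le_max
  have hka0 : 0 < ka := lt_min (Real.rpow_pos_of_pos (by norm_num) q)
    (Real.rpow_pos_of_pos (by norm_num) q)
  have hKa0 : 0 < Ka := lt_of_lt_of_le hka0 min_le_max
  refine ⟨ms * mc * c₂ * (kb * ka), Ms * Mc * C₂ * (2 * (Kb * Ka)), by positivity, by positivity,
    fun θ hθ φ hφ => ?_⟩
  obtain ⟨hθ0, hθπ⟩ := hθ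
  obtain ⟨hφ0, hφπ⟩ := hφ
  set r : ℝ := |θ - φ| with hr_def
  rcases eq_or_lt_of_le (abs_nonneg (θ - φ)) with hr0 | hr0
  · -- degenerate case r = 0
    have hball : jacobiBall θ r = ∅ := by
      rw [jacobiBall, hr_def, ← hr0]
      simp
    rw [hball]
    constructor
    · rw [hr_def, ← hr0]
      simp
    · simp
  · -- main case
    rw [← hr_def] at hr0
    set a : ℝ := max (θ - r) 0 with ha_def
    set b : ℝ := min (θ + r) π with hb_def
    have hr1 : θ - φ ≤ r := le_abs_self _
    have hr2 : φ - θ ≤ r := by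
      calc φ - θ ≤ |φ - θ| := le_abs_self _
        _ = r := by rw [hr_def, abs_sub_comm]
    have hrπ : r < π := by
      rw [hr_def]; exact abs_lt.mpr ⟨by linarith, by linarith⟩
    have hrθφ : r ≤ θ + φ := by
      rw [hr_def]; exact abs_le.mpr ⟨by linarith, by linarith⟩
    have ha0 : 0 ≤ a := le_max_right _ _
    have haθ : a ≤ θ := max_le (by linarith) hθ0.le
    have hbθ : θ < b := lt_min (by linarith) hθπ
    have hab : a < b := lt_of_le_of_lt haθ hbθ
    have hbπ : b ≤ π := min_le_right _ _
    have hamax : θ - r ≤ a := le_max_left _ _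
    have hbmin : b ≤ θ + r := min_le_left _ _
    have hba2 : b - a ≤ 2 * r := by linarith
    have hbar : r ≤ b - a := by
      rcases le_total (θ + r) π with h | h
      · rw [hb_def, min_eq_left h]; linarith
      · rw [hb_def, min_eq_right h]
        rcases le_total (θ - r) 0 with h2 | h2
        · rw [ha_def, max_eq_right h2]; linarith
        · rw [ha_def, max_eq_left h2]; linarith
    have hθφ0 : (0:ℝ) < θ + φ := by linarith
    have h2πθφ : (0:ℝ) < 2*π - θ - φ := by linarith
    have hb_lo : (1/2:ℝ) * (θ + φ) ≤ b := by
      apply le_min ?_ (by linarith)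
      rcases le_total φ θ with h | h <;> linarith
    have hb_hi : b ≤ 2 * (θ + φ) := le_trans hbmin (by linarith)
    have hπa_lo : (1/2:ℝ) * (2*π - θ - φ) ≤ π - a := by
      have h3 : a ≤ (θ + φ)/2 := by
        apply max_le ?_ (by linarith)
        rcases le_total φ θ with h | h <;> linarith
      linarith
    have hπa_hi : π - a ≤ 2 * (2*π - θ - φ) := by
      rcases le_total φ θ with h | h
      · have hre : r = θ - φ := by rw [hr_def]; exact abs_of_nonneg (by linarith)
        linarith
      · have hre : r = φ - θ := by rw [hr_def, abs_sub_comm]; exact abs_of_nonneg (by linarith)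
        linarith
    -- rpow comparisons for the geometric quantities
    have e_b := rpow_comp (p := p) (by norm_num : (0:ℝ) < 1/2) hθφ0 hb_lo hb_hi
    have e_a := rpow_comp (p := q) (by norm_num : (0:ℝ) < 1/2) h2πθφ hπa_lo hπa_hi
    have hb0 : 0 < b := lt_of_le_of_lt ha0 hab
    have hbp : (0:ℝ) ≤ b ^ p := Real.rpow_nonneg hb0.le p
    have haq : (0:ℝ) ≤ (π - a) ^ q := Real.rpow_nonneg (by linarith) q
    have hGp : (0:ℝ) ≤ (θ + φ) ^ p := Real.rpow_nonneg hθφ0.le p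
    have hGq : (0:ℝ) ≤ (2*π - θ - φ) ^ q := Real.rpow_nonneg h2πθφ.le q
    -- pointwise density comparison
    have hW : ∀ ψ ∈ Ioo a b,
        ms * mc * (ψ ^ p * (π - ψ) ^ q) ≤ Real.sin (ψ/2) ^ p * Real.cos (ψ/2) ^ q ∧
        Real.sin (ψ/2) ^ p * Real.cos (ψ/2) ^ q ≤ Ms * Mc * (ψ ^ p * (π - ψ) ^ q) := by
      intro ψ hψ
      have hψ0 : 0 < ψ := lt_of_le_of_lt ha0 hψ.1
      have hψπ : ψ < π := lt_of_lt_of_le hψ.2 hbπ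
      have hsin : ms * ψ ^ p ≤ Real.sin (ψ/2) ^ p ∧
          Real.sin (ψ/2) ^ p ≤ Ms * ψ ^ p := by
        have h1 : (1/π) * ψ ≤ Real.sin (ψ/2) := by
          have h := Real.mul_le_sin (x := ψ/2) (by linarith) (by linarith)
          calc (1/π) * ψ = 2/π * (ψ/2) := by ring
            _ ≤ Real.sin (ψ/2) := h
        have h2 : Real.sin (ψ/2) ≤ (1/2) * ψ := by
          have h := Real.sin_le (by linarith : (0:ℝ) ≤ ψ/2)
          linarith
        exact rpow_comp (by positivity) hψ0 h1 h2
      have hcoseq : Real.cos (ψ/2) = Real.sin ((π - ψ)/2) := by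
        rw [← Real.sin_pi_div_two_sub]; congr 1; ring
      have hcos : mc * (π - ψ) ^ q ≤ Real.cos (ψ/2) ^ q ∧
          Real.cos (ψ/2) ^ q ≤ Mc * (π - ψ) ^ q := by
        rw [hcoseq]
        have h1 : (1/π) * (π - ψ) ≤ Real.sin ((π - ψ)/2) := by
          have h := Real.mul_le_sin (x := (π - ψ)/2) (by linarith) (by linarith)
          calc (1/π) * (π - ψ) = 2/π * ((π - ψ)/2) := by ring
            _ ≤ Real.sin ((π - ψ)/2) := h
        have h2 : Real.sin ((π - ψ)/2) ≤ (1/2) * (π - ψ) := by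
          have h := Real.sin_le (by linarith : (0:ℝ) ≤ (π - ψ)/2)
          linarith
        exact rpow_comp (by positivity) (by linarith) h1 h2
      have hsin0 : (0:ℝ) ≤ Real.sin (ψ/2) ^ p :=
        le_trans (by positivity) hsin.1
      have hψp : (0:ℝ) ≤ ψ ^ p := Real.rpow_nonneg hψ0.le p
      have hψq : (0:ℝ) ≤ (π - ψ) ^ q := Real.rpow_nonneg (by linarith) q
      constructor
      · calc ms * mc * (ψ ^ p * (π - ψ) ^ q) = (ms * ψ ^ p) * (mc * (π - ψ) ^ q) := by ring
          _ ≤ Real.sin (ψ/2) ^ p * Real.cos (ψ/2) ^ q :=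
            mul_le_mul hsin.1 hcos.1 (by positivity) hsin0
      · calc Real.sin (ψ/2) ^ p * Real.cos (ψ/2) ^ q
            ≤ (Ms * ψ ^ p) * (Mc * (π - ψ) ^ q) :=
            mul_le_mul hsin.2 hcos.2 (le_trans (by positivity) hcos.1)
              (mul_nonneg hMs0.le hψp)
          _ = Ms * Mc * (ψ ^ p * (π - ψ) ^ q) := by ring
    rw [jacobi_repr, ← hp_def, ← hq_def, ← ha_def, ← hb_def]
    obtain ⟨hI1, hI2⟩ := H₂ a b ha0 hab hbπ
    constructor
    · -- lower bound
      have hreal : ms * mc * c₂ * (kb * ka) *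
          (r * ((θ + φ) ^ p * (2*π - θ - φ) ^ q)) ≤
          ms * mc * (c₂ * ((b - a) * (b ^ p * (π - a) ^ q))) := by
        have step : r * ((kb * (θ + φ) ^ p) * (ka * (2*π - θ - φ) ^ q)) ≤
            (b - a) * (b ^ p * (π - a) ^ q) := by
          apply mul_le_mul hbar (mul_le_mul e_b.1 e_a.1 (by positivity) hbp)
            (by positivity) (by linarith)
        calc ms * mc * c₂ * (kb * ka) * (r * ((θ + φ) ^ p * (2*π - θ - φ) ^ q))
            = (ms * mc * c₂) * (r * ((kb * (θ + φ) ^ p) * (ka * (2*π - θ - φ) ^ q))) := by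
              ring
          _ ≤ (ms * mc * c₂) * ((b - a) * (b ^ p * (π - a) ^ q)) :=
              mul_le_mul_of_nonneg_left step (by positivity)
          _ = ms * mc * (c₂ * ((b - a) * (b ^ p * (π - a) ^ q))) := by ring
      calc ENNReal.ofReal (ms * mc * c₂ * (kb * ka) *
            (r * ((θ + φ) ^ p * (2*π - θ - φ) ^ q)))
          ≤ ENNReal.ofReal (ms * mc * (c₂ * ((b - a) * (b ^ p * (π - a) ^ q)))) :=
            ENNReal.ofReal_le_ofReal hreal
        _ = ENNReal.ofReal (ms * mc) * ENNReal.ofReal (c₂ * ((b - a) * (b ^ p * (π - a) ^ q))) :=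
            ENNReal.ofReal_mul (by positivity)
        _ ≤ ENNReal.ofReal (ms * mc) * ∫⁻ ψ in Ioo a b, ENNReal.ofReal (ψ ^ p * (π - ψ) ^ q) :=
            mul_le_mul_right hI1 _
        _ = ∫⁻ ψ in Ioo a b, ENNReal.ofReal (ms * mc * (ψ ^ p * (π - ψ) ^ q)) :=
            (lint_const_mul (by positivity)).symm
        _ ≤ ∫⁻ ψ in Ioo a b, ENNReal.ofReal (Real.sin (ψ/2) ^ p * Real.cos (ψ/2) ^ q) :=
            lint_mono measurableSet_Ioo fun ψ hψ => (hW ψ hψ).1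
    · -- upper bound
      have hreal : Ms * Mc * (C₂ * ((b - a) * (b ^ p * (π - a) ^ q))) ≤
          Ms * Mc * C₂ * (2 * (Kb * Ka)) *
          (r * ((θ + φ) ^ p * (2*π - θ - φ) ^ q)) := by
        have step : (b - a) * (b ^ p * (π - a) ^ q) ≤
            (2 * r) * ((Kb * (θ + φ) ^ p) * (Ka * (2*π - θ - φ) ^ q)) := by
          apply mul_le_mul hba2 (mul_le_mul e_b.2 e_a.2 haq (by positivity))
            (mul_nonneg hbp haq) (by positivity)
        calc Ms * Mc * (C₂ * ((b - a) * (b ^ p * (π - a) ^ q)))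
            ≤ Ms * Mc * (C₂ * ((2 * r) * ((Kb * (θ + φ) ^ p) * (Ka * (2*π - θ - φ) ^ q)))) := by
              apply mul_le_mul_of_nonneg_left ?_ (by positivity)
              exact mul_le_mul_of_nonneg_left step hC₂.le
          _ = Ms * Mc * C₂ * (2 * (Kb * Ka)) * (r * ((θ + φ) ^ p * (2*π - θ - φ) ^ q)) := by
              ring
      calc (∫⁻ ψ in Ioo a b, ENNReal.ofReal (Real.sin (ψ/2) ^ p * Real.cos (ψ/2) ^ q))
          ≤ ∫⁻ ψ in Ioo a b, ENNReal.ofReal (Ms * Mc * (ψ ^ p * (π - ψ) ^ q)) :=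
            lint_mono measurableSet_Ioo fun ψ hψ => (hW ψ hψ).2
        _ = ENNReal.ofReal (Ms * Mc) * ∫⁻ ψ in Ioo a b, ENNReal.ofReal (ψ ^ p * (π - ψ) ^ q) :=
            lint_const_mul (by positivity)
        _ ≤ ENNReal.ofReal (Ms * Mc) * ENNReal.ofReal (C₂ * ((b - a) * (b ^ p * (π - a) ^ q))) :=
            mul_le_mul_right hI2 _
        _ = ENNReal.ofReal (Ms * Mc * (C₂ * ((b - a) * (b ^ p * (π - a) ^ q)))) :=
            (ENNReal.ofReal_mul (by positivity)).symm
        _ ≤ ENNReal.ofReal (Ms * Mc * C₂ * (2 * (Kb * Ka)) *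
            (r * ((θ + φ) ^ p * (2*π - θ - φ) ^ q))) :=
            ENNReal.ofReal_le_ofReal hreal

end JacobiAux
/-- comparison of ball measures for shifted parameters. -/
theorem jacobi_ball_measure_shift_comparison (α β γ₁ γ₂ : ℝ) (hα : -1 < α) (hβ : -1 < β)
    (hγ₁ : 0 ≤ γ₁) (hγ₂ : 0 ≤ γ₂) :
    ∃ c C : ℝ, 0 < c ∧ c ≤ C ∧
      ∀ θ ∈ Ioo (0 : ℝ) π, ∀ φ ∈ Ioo (0 : ℝ) π,
        ENNReal.ofReal (c * ((θ + φ) ^ (2 * γ₁) * (2 * π - θ - φ) ^ (2 * γ₂))) *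
            jacobiMeasure α β (jacobiBall θ |θ - φ|)
          ≤ jacobiMeasure (α + γ₁) (β + γ₂) (jacobiBall θ |θ - φ|) ∧
        jacobiMeasure (α + γ₁) (β + γ₂) (jacobiBall θ |θ - φ|)
          ≤ ENNReal.ofReal (C * ((θ + φ) ^ (2 * γ₁) * (2 * π - θ - φ) ^ (2 * γ₂))) *
            jacobiMeasure α β (jacobiBall θ |θ - φ|) := by
  obtain ⟨c₁, C₁, hc₁, hC₁, H₁⟩ := JacobiAux.ballEst α β hα hβ
  obtain ⟨c₂, C₂, hc₂, hC₂, H₂⟩ := JacobiAux.ballEst (α + γ₁) (β + γ₂) (by linarith) (by linarith)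
  refine ⟨c₂ / C₁, max (C₂ / c₁) (c₂ / C₁), by positivity, le_max_right _ _,
    fun θ hθ φ hφ => ?_⟩
  obtain ⟨h1L, h1U⟩ := H₁ θ hθ φ hφ
  obtain ⟨h2L, h2U⟩ := H₂ θ hθ φ hφ
  obtain ⟨hθ0, hθπ⟩ := hθ
  obtain ⟨hφ0, hφπ⟩ := hφ
  have hπ := Real.pi_pos
  have hθφ0 : (0:ℝ) < θ + φ := by linarith
  have h2π0 : (0:ℝ) < 2*π - θ - φ := by linarith
  set F : ℝ := (θ + φ) ^ (2 * γ₁) * (2 * π - θ - φ) ^ (2 * γ₂) with hF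
  have hF0 : 0 < F := mul_pos (Real.rpow_pos_of_pos hθφ0 _) (Real.rpow_pos_of_pos h2π0 _)
  set G : ℝ := |θ - φ| * ((θ + φ) ^ (2*α+1) * (2*π - θ - φ) ^ (2*β+1)) with hG
  have hG0 : 0 ≤ G := mul_nonneg (abs_nonneg _)
    (mul_nonneg (Real.rpow_nonneg hθφ0.le _) (Real.rpow_nonneg h2π0.le _))
  have hFG : |θ - φ| * ((θ + φ) ^ (2*(α+γ₁)+1) * (2*π - θ - φ) ^ (2*(β+γ₂)+1)) = F * G := by
    rw [hF, hG]
    rw [show (2*(α+γ₁)+1 : ℝ) = 2*γ₁ + (2*α+1) by ring,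
        show (2*(β+γ₂)+1 : ℝ) = 2*γ₂ + (2*β+1) by ring,
        Real.rpow_add hθφ0, Real.rpow_add h2π0]
    ring
  rw [hFG] at h2L h2U
  constructor
  · calc ENNReal.ofReal (c₂ / C₁ * F) * jacobiMeasure α β (jacobiBall θ |θ - φ|)
        ≤ ENNReal.ofReal (c₂ / C₁ * F) * ENNReal.ofReal (C₁ * G) := mul_le_mul_right h1U _
      _ = ENNReal.ofReal (c₂ / C₁ * F * (C₁ * G)) := (ENNReal.ofReal_mul (by positivity)).symm
      _ = ENNReal.ofReal (c₂ * (F * G)) := by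
          congr 1
          field_simp
      _ ≤ jacobiMeasure (α + γ₁) (β + γ₂) (jacobiBall θ |θ - φ|) := h2L
  · calc jacobiMeasure (α + γ₁) (β + γ₂) (jacobiBall θ |θ - φ|)
        ≤ ENNReal.ofReal (C₂ * (F * G)) := h2U
      _ = ENNReal.ofReal (C₂ / c₁ * F * (c₁ * G)) := by
          congr 1
          field_simp
      _ = ENNReal.ofReal (C₂ / c₁ * F) * ENNReal.ofReal (c₁ * G) :=
          ENNReal.ofReal_mul (by positivity)
      _ ≤ ENNReal.ofReal (C₂ / c₁ * F) * jacobiMeasure α β (jacobiBall θ |θ - φ|) :=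
          mul_le_mul_right h1L _
      _ ≤ ENNReal.ofReal (max (C₂ / c₁) (c₂ / C₁) * F) *
            jacobiMeasure α β (jacobiBall θ |θ - φ|) :=
          mul_le_mul_left (ENNReal.ofReal_le_ofReal
            (mul_le_mul_of_nonneg_right (le_max_left _ _) hF0.le)) _
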